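/- For every z in the hyperbolic upper half-plane ℍ, every real number ξ, and every sequence (w_n) in ℍ with (w_n : ℂ) → (ξ : ℂ), one has dist(z, w_n) − log(|(z:ℂ) − (w_n:ℂ)|² / (Im z · Im w_n)) → 0. -/

import Mathlib

open Filter Topology

open Real in
lemma aux_tendsto : Tendsto (fun r : ℝ => 2 * Real.arsinh r - 2 * Real.log (2 * r))
    atTop (𝓝 0) := by
  have h2 : Tendsto (fun r : ℝ => 1 / r ^ 2 + 1) atTop (𝓝 (1 : ℝ)) := by
    have hp : Tendsto (fun r : ℝ => r ^ 2) atTop atTop :=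
      tendsto_pow_atTop (by norm_num : (2:ℕ) ≠ 0)
    have h0 : Tendsto (fun r : ℝ => 1 / r ^ 2) atTop (𝓝 (0:ℝ)) := by
      simpa [one_div, Pi.inv_def] using hp.inv_tendsto_atTop
    simpa using h0.add tendsto_const_nhds
  have h1 : Tendsto (fun r : ℝ => (r + Real.sqrt (1 + r ^ 2)) / (2 * r)) atTop (𝓝 1) := by
    have h3 : Tendsto (fun r : ℝ => 1 / 2 + Real.sqrt (1 / r ^ 2 + 1) / 2) atTop (𝓝 (1:ℝ)) := by
      have := ((Real.continuous_sqrt.tendsto 1).comp h2).div_const 2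
      have := this.const_add (1/2 : ℝ)
      norm_num at this
      convert this using 2
      norm_num
    refine h3.congr' ?_
    filter_upwards [eventually_gt_atTop 0] with r hr
    have hs : Real.sqrt (1 / r ^ 2 + 1) = Real.sqrt (1 + r ^ 2) / r := by
      rw [show 1 / r ^ 2 + 1 = (1 + r ^ 2) / r ^ 2 by field_simp,
        Real.sqrt_div (by positivity), Real.sqrt_sq hr.le]
    rw [hs, eq_div_iff (by positivity : (2:ℝ) * r ≠ 0)]
    field_simp
  have hlog : Tendsto (fun r : ℝ => 2 * Real.log ((r + Real.sqrt (1 + r ^ 2)) / (2 * r)))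
      atTop (𝓝 0) := by
    have := ((Real.continuousAt_log one_ne_zero).tendsto.comp h1).const_mul 2
    simpa using this
  refine hlog.congr' ?_
  filter_upwards [eventually_gt_atTop 0] with r hr
  have hpos : 0 < r + Real.sqrt (1 + r ^ 2) := by positivity
  rw [Real.log_div hpos.ne' (by positivity), Real.arsinh]
  ring

/-- For `z` in the hyperbolic upper half-plane, a boundary point `ξ ∈ ℝ`,
and any sequence `w n` in the upper half-plane converging (in `ℂ`) to `ξ`, one has
`dist z (w n) - log (|z - w n|² / (Im z · Im (w n))) → 0`. -/
theorem hyperbolic_dist_asymptotic (z : UpperHalfPlane) (ξ : ℝ) (w : ℕ → UpperHalfPlane)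
    (hw : Tendsto (fun n => ((w n : ℂ))) atTop (𝓝 (ξ : ℂ))) :
    Tendsto (fun n => dist z (w n)
        - Real.log (‖(z : ℂ) - ((w n : ℂ))‖ ^ 2 / (z.im * (w n).im)))
      atTop (𝓝 0) := by
  set r : ℕ → ℝ := fun n => ‖(z : ℂ) - (w n : ℂ)‖ / (2 * Real.sqrt (z.im * (w n).im))
  -- im of w n tends to 0
  have him : Tendsto (fun n => (w n).im) atTop (𝓝 0) := by
    have := (Complex.continuous_im.tendsto _).comp hw
    simpa [Function.comp_def, UpperHalfPlane.coe_im] using this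
  have hzξ : (z : ℂ) ≠ (ξ : ℂ) := by
    intro h
    have := z.im_pos
    rw [UpperHalfPlane.im, h] at this
    simp at this
  have habs : Tendsto (fun n => ‖(z : ℂ) - (w n : ℂ)‖) atTop
      (𝓝 (‖(z : ℂ) - (ξ : ℂ)‖)) := by
    exact (continuous_norm.tendsto _).comp ((tendsto_const_nhds.sub hw))
  have habspos : 0 < ‖(z : ℂ) - (ξ : ℂ)‖ := by
    simpa [sub_eq_zero] using hzξ
  -- r tends to atTop
  have hrtop : Tendsto r atTop atTop := by
    have hden : Tendsto (fun n => 2 * Real.sqrt (z.im * (w n).im)) atTop (𝓝[>] 0) := by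
      rw [tendsto_nhdsWithin_iff]
      constructor
      · have : Tendsto (fun n => z.im * (w n).im) atTop (𝓝 0) := by
          simpa using him.const_mul z.im
        have := ((Real.continuous_sqrt.tendsto 0).comp this).const_mul 2
        simpa using this
      · filter_upwards with n
        have : 0 < z.im * (w n).im := mul_pos z.im_pos (w n).im_pos
        exact Set.mem_Ioi.mpr (by positivity)
    have hinv : Tendsto (fun n => (2 * Real.sqrt (z.im * (w n).im))⁻¹) atTop atTop :=
      tendsto_inv_nhdsGT_zero.comp hden
    have := Filter.Tendsto.pos_mul_atTop habspos habs hinv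
    simpa [r, div_eq_mul_inv] using this
  -- rewrite target as composition
  have key : Tendsto (fun n => 2 * Real.arsinh (r n) - 2 * Real.log (2 * r n)) atTop (𝓝 0) :=
    aux_tendsto.comp hrtop
  refine key.congr' ?_
  filter_upwards [hrtop.eventually (eventually_gt_atTop 0)] with n hrn
  have him' : 0 < z.im * (w n).im := mul_pos z.im_pos (w n).im_pos
  have hdist : dist z (w n) = 2 * Real.arsinh (r n) := by
    rw [UpperHalfPlane.dist_eq, Complex.dist_eq]
  have hsq : ‖(z : ℂ) - (w n : ℂ)‖ ^ 2 / (z.im * (w n).im) = (2 * r n) ^ 2 := by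
    have : Real.sqrt (z.im * (w n).im) ^ 2 = z.im * (w n).im := Real.sq_sqrt him'.le
    simp only [r]
    rw [mul_div_assoc', mul_div_mul_left _ _ two_ne_zero, div_pow, this]
  rw [hdist, hsq, Real.log_pow]
  push_cast
  ring
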